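/- In ℤ/(2p) with p an odd prime, the neighborhood of the vertex 1 in the nil clean divisor graph is exactly {p, p+1}: for nonzero y ≠ 1, the product 1·y is nil clean iff y ∈ {p, p+1}. -/
import Mathlib


def IsNilCleanElem {R : Type*} [CommRing R] (x : R) : Prop :=
  ∃ e n : R, IsIdempotentElem e ∧ IsNilpotent n ∧ x = e + n

def NCVertex {R : Type*} [CommRing R] (x : R) : Prop :=
  x ≠ 0 ∧ ∃ y : R, y ≠ 0 ∧ y ≠ x ∧ IsNilCleanElem (x * y)

def NCAdj {R : Type*} [CommRing R] (x y : R) : Prop :=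
  x ≠ y ∧ NCVertex x ∧ NCVertex y ∧ IsNilCleanElem (x * y)

theorem stmt13 (p : ℕ) (hp : p.Prime) (hodd : Odd p) :
    ∀ y : ZMod (2 * p), y ≠ 0 → y ≠ 1 →
      (IsNilCleanElem (1 * y) ↔
        y = (p : ZMod (2 * p)) ∨ y = (p : ZMod (2 * p)) + 1) := by
  haveI := Fact.mk hp
  have hp2 : p ≠ 2 := by rintro rfl; simp [Nat.odd_iff] at hodd
  have hcop : Nat.Coprime 2 p := (Nat.coprime_primes Nat.prime_two hp).mpr (Ne.symm hp2)
  have hsqf : Squarefree (2 * p) :=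
    Nat.squarefree_mul_iff.mpr ⟨hcop, Nat.prime_two.squarefree, hp.squarefree⟩
  haveI : IsReduced (ZMod (2 * p)) := isReduced_zmod.mpr (Or.inl hsqf)
  set e := ZMod.chineseRemainder hcop with he
  have h2 : ((p : ℕ) : ZMod 2) = 1 := by
    rw [← ZMod.natCast_mod, Nat.odd_iff.mp hodd]; norm_num
  have hep : e ((p : ZMod (2*p))) = (1, 0) := by
    have := map_natCast (e : ZMod (2*p) →+* ZMod 2 × ZMod p) p
    rw [show ((e : ZMod (2*p) →+* ZMod 2 × ZMod p) (p : ZMod (2*p))) = e (p : ZMod (2*p))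
      from rfl] at this
    rw [this, Prod.ext_iff]
    exact ⟨h2, ZMod.natCast_self p⟩
  have hep1 : e ((p : ZMod (2*p)) + 1) = (0, 1) := by
    rw [map_add, hep, map_one]
    show ((1 : ZMod 2) + 1, (0 : ZMod p) + 1) = (0, 1)
    rw [Prod.mk.injEq]
    exact ⟨by decide, by simp⟩
  -- p and p+1 are idempotent
  have hidp : IsIdempotentElem ((p : ZMod (2*p))) := by
    unfold IsIdempotentElem
    apply e.injective
    rw [map_mul, hep, Prod.mk_mul_mk]
    norm_num
  have hidp1 : IsIdempotentElem ((p : ZMod (2*p)) + 1) := by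
    unfold IsIdempotentElem
    apply e.injective
    rw [map_mul, hep1, Prod.mk_mul_mk]
    norm_num
  intro y hy0 hy1
  rw [one_mul]
  constructor
  · rintro ⟨E, n, hE, hn, rfl⟩
    have hn0 : n = 0 := IsReduced.eq_zero n hn
    subst hn0
    rw [add_zero] at *
    -- E is idempotent; analyze via CRT
    have h1 : (e E).1 * (e E).1 = (e E).1 := by
      have := congrArg (fun z => (e z).1) hE.eq
      simpa [map_mul] using this
    have h2' : (e E).2 * (e E).2 = (e E).2 := by
      have := congrArg (fun z => (e z).2) hE.eq
      simpa [map_mul] using this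
    have ha : (e E).1 = 0 ∨ (e E).1 = 1 := by
      revert h1; generalize (e E).1 = a; revert a; decide
    have hb : (e E).2 = 0 ∨ (e E).2 = 1 := by
      have hfac : (e E).2 * ((e E).2 - 1) = 0 := by linear_combination h2'
      rcases mul_eq_zero.mp hfac with h | h
      · exact Or.inl h
      · exact Or.inr (by linear_combination h)
    rcases ha with ha | ha <;> rcases hb with hb | hb
    · exact absurd (e.injective (by rw [map_zero, Prod.ext_iff]; exact ⟨ha, hb⟩)) hy0
    · exact Or.inr (e.injective (by rw [hep1, Prod.ext_iff]; exact ⟨ha, hb⟩))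
    · exact Or.inl (e.injective (by rw [hep, Prod.ext_iff]; exact ⟨ha, hb⟩))
    · exact absurd (e.injective (by rw [map_one, Prod.ext_iff]; exact ⟨ha, hb⟩)) hy1
  · rintro (rfl | rfl)
    · exact ⟨_, 0, hidp, IsNilpotent.zero, (add_zero _).symm⟩
    · exact ⟨_, 0, hidp1, IsNilpotent.zero, (add_zero _).symm⟩
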